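/- The total number of admissible configurations equals |S| = Λ((N₁, …, N_K), (R₁, …, R_K), M). -/

import Mathlib

open scoped Classical
open Finset

section MoneyExchange

variable {V : Type*} [Fintype V] [DecidableEq V] {K : ℕ}

/-- Move one coin from `x` to `y`. -/
def tau (x y : V) (ξ : V → ℤ) : V → ℤ :=
  fun z => ξ z - (if z = x then 1 else 0) + (if z = y then 1 else 0)

/-- Total (nonpositive) debt of the customers of bank `i`:
`∑_{z ∈ Vᵢ} ξ(z) · 1{ξ(z) < 0}`. -/
def bankDebt (bank : V → Fin K) (ξ : V → ℤ) (i : Fin K) : ℤ :=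
  ∑ z ∈ univ.filter fun z => bank z = i, min (ξ z) 0

/-- Admissible configurations: total money `M` and each bank lends at most `Rᵢ`. -/
def admissible (bank : V → Fin K) (R : Fin K → ℕ) (M : ℕ) (ξ : V → ℤ) : Prop :=
  (∑ z, ξ z) = (M : ℤ) ∧ ∀ i, -(R i : ℤ) ≤ bankDebt bank ξ i

/-- The move from `x` is allowed in `ξ`: `x` has a coin or its bank is nonempty. -/
def allowed (bank : V → Fin K) (R : Fin K → ℕ) (ξ : V → ℤ) (x : V) : Prop :=
  0 < ξ x ∨ -(R (bank x) : ℤ) < bankDebt bank ξ (bank x)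

/-- One-step transition probability of the money-exchange chain: each ordered
adjacent pair `(x, y)` is chosen with probability `1/(2|E|)`, and a coin moves
from `x` to `y` whenever the move from `x` is allowed; otherwise nothing happens. -/
noncomputable def step (G : SimpleGraph V) (bank : V → Fin K) (R : Fin K → ℕ)
    (ξ ξ' : V → ℤ) : ℝ :=
  (((univ.filter fun pq : V × V =>
        G.Adj pq.1 pq.2 ∧ allowed bank R ξ pq.1 ∧ tau pq.1 pq.2 ξ = ξ').card : ℝ)
      + if ξ' = ξ then
          ((univ.filter fun pq : V × V =>
            G.Adj pq.1 pq.2 ∧ ¬ allowed bank R ξ pq.1).card : ℝ)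
        else 0)
    / ((univ.filter fun pq : V × V => G.Adj pq.1 pq.2).card : ℝ)

/-- `t`-step transition probability of the money-exchange chain. -/
noncomputable def stepT (G : SimpleGraph V) (bank : V → Fin K) (R : Fin K → ℕ) :
    ℕ → (V → ℤ) → (V → ℤ) → ℝ
  | 0, ξ, ξ' => if ξ = ξ' then 1 else 0
  | t + 1, ξ, ξ' =>
      ∑ η ∈ insert ξ ((univ.filter fun pq : V × V => G.Adj pq.1 pq.2).image
          fun pq => tau pq.1 pq.2 ξ),
        step G bank R ξ η * stepT G bank R t η ξ'

end MoneyExchange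

/-- Binomial coefficient `C(a−1, b−1)` with the conventions: equal to `1` when
`a = b = 0`, to `0` when exactly one of `a`, `b` is `0`, and to `0` when
`b − 1 > a − 1`. -/
def ccat (a b : ℕ) : ℕ :=
  if a = 0 ∧ b = 0 then 1 else if a = 0 ∨ b = 0 then 0 else (a - 1).choose (b - 1)

/-- Binomial coefficient `C(s, t)` for integers `s`, `t`, equal to `0` whenever
`t < 0` or `t > s`. -/
def chooseZ (s t : ℤ) : ℕ :=
  if 0 ≤ t ∧ t ≤ s then s.toNat.choose t.toNat else 0

/-- The counting function `Λ(n, r, m)`. -/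
def Lambda {K : ℕ} (n r : Fin K → ℕ) (m : ℤ) : ℕ :=
  ∑ a ∈ Fintype.piFinset fun i : Fin K => Finset.range (r i + 1),
    ∑ b ∈ Fintype.piFinset fun i : Fin K => Finset.range (n i + 1),
      (∏ i, (n i).choose (b i) * ccat (a i) (b i)) *
        chooseZ (m + (∑ i, (a i : ℤ)) + (∑ i, (n i : ℤ)) - (∑ i, (b i : ℤ)) - 1)
                ((∑ i, (n i : ℤ)) - (∑ i, (b i : ℤ)) - 1)


section AuxCount

lemma multichoose_eq_choose (d m : ℕ) :
    Nat.multichoose (d + 1) m = (d + m).choose d := by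
  rw [Nat.multichoose_eq]
  have h1 : d + 1 + m - 1 = d + m := by omega
  rw [h1]
  have := Nat.choose_symm (Nat.le_add_left m d)
  simpa using this.symm

lemma multichoose_zero (k : ℕ) : Nat.multichoose 0 k = if k = 0 then 1 else 0 := by
  cases k <;> simp [Nat.multichoose_zero_succ]

lemma sum_antidiag_multichoose (c n : ℕ) :
    ∑ ij ∈ Finset.HasAntidiagonal.antidiagonal n, Nat.multichoose c ij.2 = Nat.multichoose (c + 1) n := by
  cases c with
  | zero =>
    rw [Finset.Nat.sum_antidiagonal_eq_sum_range_succ_mk]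
    rw [Nat.multichoose_one]
    simp only [multichoose_zero]
    have h2 : ∀ x ∈ Finset.range (n+1), (if n - x = 0 then 1 else 0)
        = if x = n then 1 else 0 := by
      intro x hx; simp only [mem_range] at hx
      exact if_congr (by omega) rfl rfl
    rw [Finset.sum_congr rfl h2, Finset.sum_ite_eq' (Finset.range (n+1)) n (fun _ => 1)]
    simp
  | succ d =>
    simp only [multichoose_eq_choose]
    rw [Finset.sum_antidiagonal_choose_add]
    have h3 : d + 1 + n = d + n + 1 := by omega
    rw [h3, Nat.choose_succ_succ']

lemma card_piAntidiag {ι : Type*} [DecidableEq ι] (s : Finset ι) (n : ℕ) :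
    (s.piAntidiag n).card = Nat.multichoose s.card n := by
  induction s using Finset.cons_induction generalizing n with
  | empty =>
    rw [piAntidiag_empty]
    cases n <;> simp [Nat.multichoose_zero_succ]
  | cons i s hi ih =>
    rw [piAntidiag_cons, card_disjiUnion]
    simp only [card_map, ih, card_cons]
    exact sum_antidiag_multichoose _ _

lemma multichoose_sub_eq_ccat (a b : ℕ) (h : b ≤ a) :
    Nat.multichoose b (a - b) = ccat a b := by
  cases b with
  | zero =>
    rcases Nat.eq_zero_or_pos a with ha | ha
    · simp [ha, ccat]
    · obtain ⟨c, rfl⟩ : ∃ c, a = c + 1 := ⟨a - 1, by omega⟩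
      rw [Nat.sub_zero, Nat.multichoose_zero_succ]
      simp [ccat]
  | succ d =>
    rw [multichoose_eq_choose]
    have h1 : d + (a - (d + 1)) = a - 1 := by omega
    rw [h1]
    simp only [ccat]
    rw [if_neg (show ¬(a = 0 ∧ d + 1 = 0) by omega),
      if_neg (show ¬(a = 0 ∨ d + 1 = 0) by omega)]
    simp

lemma card_exact {ι : Type*} [DecidableEq ι] (s : Finset ι) (a : ℕ) :
    ((s.piAntidiag a).filter fun q => ∀ i ∈ s, q i ≠ 0).card = ccat a s.card := by
  rcases lt_or_ge a s.card with h | h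
  · -- empty
    have hempty : ((s.piAntidiag a).filter fun q => ∀ i ∈ s, q i ≠ 0) = ∅ := by
      rw [Finset.filter_eq_empty_iff]
      intro q hq
      rw [mem_piAntidiag] at hq
      intro hpos
      have hq1 : ∑ i ∈ s, q i = a := hq.1
      have hc : s.card = ∑ i ∈ s, 1 := by simp
      have hle : ∑ i ∈ s, 1 ≤ ∑ i ∈ s, q i :=
        Finset.sum_le_sum fun i hi => Nat.one_le_iff_ne_zero.2 (hpos i hi)
      omega
    rw [hempty, Finset.card_empty]
    have hb : s.card ≠ 0 := by omega
    rcases Nat.eq_zero_or_pos a with ha | ha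
    · simp [ccat, ha, hb]
    · simp only [ccat]
      rw [if_neg (by omega), if_neg (by push_neg; exact ⟨by omega, hb⟩)]
      exact (Nat.choose_eq_zero_of_lt (by omega)).symm
  · have key : ((s.piAntidiag a).filter fun q => ∀ i ∈ s, q i ≠ 0).card
        = (s.piAntidiag (a - s.card)).card := by
      apply Finset.card_nbij' (fun q i => q i - if i ∈ s then 1 else 0)
        (fun p i => p i + if i ∈ s then 1 else 0)
      · intro q hq
        rw [Finset.mem_coe, mem_filter, mem_piAntidiag] at hq
        obtain ⟨⟨hsum, hsupp⟩, hpos⟩ := hq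
        rw [Finset.mem_coe, mem_piAntidiag]
        beta_reduce
        constructor
        · rw [Finset.sum_congr rfl (fun i hi => by rw [if_pos hi]),
            Finset.sum_tsub_distrib s (fun i hi => Nat.one_le_iff_ne_zero.2 (hpos i hi))]
          simp [hsum]
        · intro i hi
          by_contra hns
          exact hi (by simpa [hns] using (fun h => hns (hsupp i h)))
      · intro p hp
        rw [Finset.mem_coe, mem_piAntidiag] at hp
        obtain ⟨hsum, hsupp⟩ := hp
        rw [Finset.mem_coe, mem_filter, mem_piAntidiag]
        beta_reduce
        refine ⟨⟨?_, ?_⟩, ?_⟩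
        · rw [Finset.sum_congr rfl (fun i hi => by rw [if_pos hi]), Finset.sum_add_distrib]
          simp [hsum]
          omega
        · intro i hi
          by_contra hns
          simp [hns] at hi
          exact hns (hsupp i hi)
        · intro i hi
          simp [hi]
      · intro q hq
        rw [Finset.mem_coe, mem_filter, mem_piAntidiag] at hq
        funext i
        by_cases hi : i ∈ s
        · have := hq.2 i hi
          simp [hi]; omega
        · simp [hi]
      · intro p hp
        funext i
        by_cases hi : i ∈ s <;> simp [hi]
    rw [key, card_piAntidiag]
    exact multichoose_sub_eq_ccat a s.card h

lemma card_filter_support {ι : Type*} [DecidableEq ι] (W : Finset ι) (a b : ℕ) :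
    ((W.piAntidiag a).filter fun q => (W.filter fun i => q i ≠ 0).card = b).card
      = W.card.choose b * ccat a b := by
  rw [Finset.card_eq_sum_card_fiberwise
    (f := fun q => W.filter fun i => q i ≠ 0) (t := W.powersetCard b) ?hmaps]
  case hmaps =>
    intro q hq
    rw [Finset.mem_coe, mem_filter] at hq
    rw [Finset.mem_coe, Finset.mem_powersetCard]
    exact ⟨Finset.filter_subset _ _, hq.2⟩
  have hfib : ∀ T ∈ W.powersetCard b,
      (((W.piAntidiag a).filter fun q => (W.filter fun i => q i ≠ 0).card = b).filter
        fun q => (W.filter fun i => q i ≠ 0) = T)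
      = (T.piAntidiag a).filter fun q => ∀ i ∈ T, q i ≠ 0 := by
    intro T hT
    rw [Finset.mem_powersetCard] at hT
    obtain ⟨hTW, hTb⟩ := hT
    ext q
    simp only [mem_filter, mem_piAntidiag]
    constructor
    · rintro ⟨⟨⟨hsum, hsupp⟩, _⟩, hfil⟩
      have hsupT : ∀ i, q i ≠ 0 → i ∈ T := by
        intro i hi
        rw [← hfil, mem_filter]
        exact ⟨hsupp i hi, hi⟩
      refine ⟨⟨?_, hsupT⟩, ?_⟩
      · rw [← hsum]
        exact Finset.sum_subset hTW (fun i hiW hiT => by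
          by_contra hne
          exact hiT (hsupT i hne))
      · intro i hi
        rw [← hfil, mem_filter] at hi
        exact hi.2
    · rintro ⟨⟨hsum, hsupp⟩, hpos⟩
      have hfil : (W.filter fun i => q i ≠ 0) = T := by
        ext i
        rw [mem_filter]
        constructor
        · rintro ⟨_, hi⟩; exact hsupp i hi
        · intro hi; exact ⟨hTW hi, hpos i hi⟩
      refine ⟨⟨⟨?_, fun i hi => hTW (hsupp i hi)⟩, by rw [hfil, hTb]⟩, hfil⟩
      rw [← hsum]
      exact (Finset.sum_subset hTW (fun i hiW hiT => by
        by_contra hne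
        exact hiT (hsupp i hne))).symm
  have hsum2 : ∀ T ∈ W.powersetCard b,
      (((W.piAntidiag a).filter fun q => (W.filter fun i => q i ≠ 0).card = b).filter
        fun q => (W.filter fun i => q i ≠ 0) = T).card = ccat a b := by
    intro T hT
    rw [hfib T hT, card_exact, (Finset.mem_powersetCard.1 hT).2]
  rw [Finset.sum_congr rfl hsum2, Finset.sum_const, Finset.card_powersetCard, smul_eq_mul]

lemma ccat_ne_zero_le {a b : ℕ} (h : ccat a b ≠ 0) : b ≤ a := by
  by_contra hlt
  apply h
  simp only [ccat]
  rcases Nat.eq_zero_or_pos a with ha | ha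
  · rw [if_neg (by omega), if_pos (by omega)]
  · rw [if_neg (by omega), if_neg (by omega)]
    exact Nat.choose_eq_zero_of_lt (by omega)

lemma summand_eq {K : ℕ} (n b a : Fin K → ℕ) (M N : ℕ) (hN : 2 ≤ N)
    (hNsum : N = ∑ i, n i) (hb : ∀ i, b i ≤ n i) :
    (∏ i, (n i).choose (b i) * ccat (a i) (b i))
        * Nat.multichoose (N - ∑ i, b i) (M + ∑ i, a i)
      = (∏ i, (n i).choose (b i) * ccat (a i) (b i)) *
          chooseZ ((M : ℤ) + (∑ i, (a i : ℤ)) + (∑ i, (n i : ℤ)) - (∑ i, (b i : ℤ)) - 1)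
                  ((∑ i, (n i : ℤ)) - (∑ i, (b i : ℤ))- 1) := by
  have hAZ : (∑ i, (a i : ℤ)) = ((∑ i, a i : ℕ) : ℤ) := by push_cast; try rfl
  have hBZ : (∑ i, (b i : ℤ)) = ((∑ i, b i : ℕ) : ℤ) := by push_cast; try rfl
  have hNZ : (∑ i, (n i : ℤ)) = ((N : ℕ) : ℤ) := by rw [hNsum]; push_cast; try rfl
  have hBN : ∑ i, b i ≤ N := by
    rw [hNsum]; exact Finset.sum_le_sum fun i _ => hb i
  set A := ∑ i, a i
  set B := ∑ i, b i
  rcases lt_or_eq_of_le hBN with hlt | heq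
  · congr 1
    obtain ⟨d, hd⟩ : ∃ d, N - B = d + 1 := ⟨N - B - 1, by omega⟩
    rw [hd, multichoose_eq_choose]
    rw [chooseZ, if_pos (by constructor <;> [rw [hNZ, hBZ]; skip] <;> omega)]
    have h1 : (((M : ℤ) + (∑ i, (a i : ℤ)) + (∑ i, (n i : ℤ)) - (∑ i, (b i : ℤ)) - 1)).toNat
        = d + (M + A) := by rw [hAZ, hNZ, hBZ]; omega
    have h2 : (((∑ i, (n i : ℤ)) - (∑ i, (b i : ℤ)) - 1)).toNat = d := by
      rw [hNZ, hBZ]; omega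
    rw [h1, h2]
  · rcases Nat.eq_zero_or_pos (∏ i, (n i).choose (b i) * ccat (a i) (b i)) with h0 | h0
    · rw [h0, Nat.zero_mul, Nat.zero_mul]
    · have hfac := Finset.prod_ne_zero_iff.1 h0.ne'
      have hccat : ∀ i, ccat (a i) (b i) ≠ 0 := fun i =>
        (Nat.mul_ne_zero_iff.1 (hfac i (mem_univ i))).2
      have hab : ∀ i, b i ≤ a i := fun i => ccat_ne_zero_le (hccat i)
      have hA : B ≤ A := Finset.sum_le_sum fun i _ => hab i
      have hApos : 0 < M + A := by omega
      obtain ⟨c, hc⟩ : ∃ c, M + A = c + 1 := ⟨M + A - 1, by omega⟩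
      rw [← heq, Nat.sub_self, hc, Nat.multichoose_zero_succ]
      rw [chooseZ, if_neg (by rw [hNZ, hBZ, ← heq]; omega)]

lemma card_bank_product {V : Type*} [Fintype V] [DecidableEq V] {K : ℕ}
    (bank : V → Fin K) (a b : Fin K → ℕ) :
    (((univ : Finset V).piAntidiag (∑ i, a i)).filter fun q =>
        ∀ i, (∑ z ∈ univ.filter fun z => bank z = i, q z) = a i ∧
          ((univ.filter fun z => bank z = i).filter fun z => q z ≠ 0).card = b i).card
      = ∏ i, ((univ.filter fun z => bank z = i).card.choose (b i) * ccat (a i) (b i)) := by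
  classical
  set Vi : Fin K → Finset V := fun i => univ.filter fun z => bank z = i with hVi
  have key : (((univ : Finset V).piAntidiag (∑ i, a i)).filter fun q =>
        ∀ i, (∑ z ∈ Vi i, q z) = a i ∧ ((Vi i).filter fun z => q z ≠ 0).card = b i).card
      = (Fintype.piFinset fun i => ((Vi i).piAntidiag (a i)).filter
          fun q => ((Vi i).filter fun z => q z ≠ 0).card = b i).card := by
    apply Finset.card_nbij' (fun q i z => if bank z = i then q z else 0)
      (fun F z => F (bank z) z)
    · intro q hq
      rw [Finset.mem_coe, mem_filter, mem_piAntidiag] at hq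
      obtain ⟨⟨hsum, hsupp⟩, hbank⟩ := hq
      rw [Finset.mem_coe, Fintype.mem_piFinset]
      intro i
      rw [mem_filter, mem_piAntidiag]
      beta_reduce
      have hcong : ∀ z ∈ Vi i, (if bank z = i then q z else 0) = q z := by
        intro z hz
        rw [hVi, mem_filter] at hz
        rw [if_pos hz.2]
      refine ⟨⟨?_, ?_⟩, ?_⟩
      · rw [Finset.sum_congr rfl hcong]
        exact (hbank i).1
      · intro z hz
        rw [hVi, mem_filter]
        refine ⟨mem_univ z, ?_⟩
        by_contra hne
        exact hz (by rw [if_neg hne])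
      · rw [Finset.filter_congr (fun z hz => by
          show (if bank z = i then q z else 0) ≠ 0 ↔ q z ≠ 0
          rw [hcong z hz])]
        exact (hbank i).2
    · intro F hF
      rw [Finset.mem_coe, Fintype.mem_piFinset] at hF
      have hFi : ∀ i, (∑ z ∈ Vi i, F i z) = a i ∧ (∀ z, F i z ≠ 0 → z ∈ Vi i) ∧
          ((Vi i).filter fun z => F i z ≠ 0).card = b i := by
        intro i
        have := hF i
        rw [mem_filter, mem_piAntidiag] at this
        exact ⟨this.1.1, this.1.2, this.2⟩
      have hagree : ∀ i, ∀ z ∈ Vi i, F (bank z) z = F i z := by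
        intro i z hz
        rw [hVi, mem_filter] at hz
        rw [hz.2]
      rw [Finset.mem_coe, mem_filter, mem_piAntidiag]
      refine ⟨⟨?_, fun z _ => mem_univ z⟩, ?_⟩
      · rw [← Finset.sum_fiberwise univ bank (fun z => F (bank z) z)]
        apply Finset.sum_congr rfl
        intro i _
        rw [Finset.sum_congr rfl (hagree i)]
        exact (hFi i).1
      · intro i
        constructor
        · rw [Finset.sum_congr rfl (hagree i)]
          exact (hFi i).1
        · rw [Finset.filter_congr (fun z hz => by
            show F (bank z) z ≠ 0 ↔ F i z ≠ 0
            rw [hagree i z hz])]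
          exact (hFi i).2.2
    · intro q hq
      funext z
      simp
    · intro F hF
      rw [Finset.mem_coe, Fintype.mem_piFinset] at hF
      funext i z
      show (if bank z = i then F (bank z) z else 0) = F i z
      by_cases hz : bank z = i
      · rw [if_pos hz, hz]
      · rw [if_neg hz]
        have hmem := hF i
        rw [mem_filter, mem_piAntidiag] at hmem
        have h0 : F i z = 0 := by
          by_contra hne
          have hzi := hmem.1.2 z hne
          rw [hVi, mem_filter] at hzi
          exact hz hzi.2
        rw [h0]
  rw [key, Fintype.card_piFinset]
  apply Finset.prod_congr rfl
  intro i _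
  exact card_filter_support (Vi i) (a i) (b i)


variable {V : Type*} [Fintype V] [DecidableEq V] {K : ℕ}

lemma stepA (bank : V → Fin K) (R : Fin K → ℕ) (M : ℕ) :
    Nat.card {ξ : V → ℤ // admissible bank R M ξ} =
    (((Fintype.piFinset fun _z : V => Finset.range ((∑ i, R i) + 1)).filter fun q =>
        ∀ i, ∑ z ∈ univ.filter fun z => bank z = i, q z ≤ R i).sigma
      fun q => (univ.filter fun z => q z = 0).piAntidiag (M + ∑ z, q z)).card := by
  classical
  set Dfin := ((Fintype.piFinset fun _z : V => Finset.range ((∑ i, R i) + 1)).filter fun q =>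
        ∀ i, ∑ z ∈ univ.filter fun z => bank z = i, q z ≤ R i) with hDfin
  set Sfin := Dfin.sigma fun q => (univ.filter fun z => q z = 0).piAntidiag (M + ∑ z, q z)
    with hSfin
  have hdebt : ∀ (ξ : V → ℤ) (i : Fin K),
      bankDebt bank ξ i = -∑ z ∈ univ.filter fun z => bank z = i, ((-ξ z).toNat : ℤ) := by
    intro ξ i
    rw [bankDebt, ← Finset.sum_neg_distrib]
    exact Finset.sum_congr rfl fun z _ => by omega
  have e : {ξ : V → ℤ // admissible bank R M ξ} ≃ {x // x ∈ Sfin} := by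
    refine ⟨fun ξ => ⟨⟨fun z => (-ξ.1 z).toNat, fun z => (ξ.1 z).toNat⟩, ?_⟩,
        fun x => ⟨fun z => (x.1.2 z : ℤ) - (x.1.1 z : ℤ), ?_⟩, ?_, ?_⟩
    · -- forward membership
      obtain ⟨ξ, hsum, hdebts⟩ := ξ
      rw [hSfin, Finset.mem_sigma]
      set q : V → ℕ := fun z => (-ξ z).toNat with hq
      set p : V → ℕ := fun z => (ξ z).toNat with hp
      have hbank : ∀ i, ∑ z ∈ univ.filter fun z => bank z = i, q z ≤ R i := by
        intro i
        have h1 := hdebts i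
        rw [hdebt ξ i] at h1
        have h2 : ((∑ z ∈ univ.filter fun z => bank z = i, q z : ℕ) : ℤ)
            = ∑ z ∈ univ.filter fun z => bank z = i, ((-ξ z).toNat : ℤ) := by
          push_cast [hq]
          try rfl
        omega
      constructor
      · rw [hDfin, Finset.mem_filter]
        refine ⟨?_, hbank⟩
        rw [Fintype.mem_piFinset]
        intro z
        rw [Finset.mem_range]
        show q z < (∑ i, R i) + 1
        have h3 : q z ≤ ∑ w ∈ univ.filter fun w => bank w = bank z, q w :=
          Finset.single_le_sum (fun w _ => Nat.zero_le _)
            (by rw [Finset.mem_filter]; exact ⟨mem_univ z, rfl⟩)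
        have h4 : R (bank z) ≤ ∑ i, R i :=
          Finset.single_le_sum (fun i _ => Nat.zero_le _) (mem_univ _)
        have := hbank (bank z)
        omega
      · rw [mem_piAntidiag]
        constructor
        · have hsub : ∑ z ∈ univ.filter fun z => q z = 0, p z = ∑ z, p z := by
            apply Finset.sum_subset (Finset.filter_subset _ _)
            intro z _ hz
            rw [Finset.mem_filter] at hz
            simp only [mem_univ, true_and] at hz
            simp only [hp, hq] at hz ⊢
            omega
          rw [hsub]
          have hcast : ((∑ z, p z : ℕ) : ℤ) = ((M + ∑ z, q z : ℕ) : ℤ) := by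
            push_cast
            have h5 : ∀ z, (p z : ℤ) = ξ z + (q z : ℤ) := by
              intro z; simp only [hp, hq]; omega
            rw [Finset.sum_congr rfl fun z _ => h5 z, Finset.sum_add_distrib, hsum]
          exact_mod_cast hcast
        · intro z hz
          rw [Finset.mem_filter]
          refine ⟨mem_univ z, ?_⟩
          simp only [hp] at hz
          simp only [hq]
          omega
    · -- backward membership
      obtain ⟨⟨q, p⟩, hx⟩ := x
      rw [hSfin, Finset.mem_sigma, hDfin, Finset.mem_filter, mem_piAntidiag] at hx
      obtain ⟨⟨_, hbank⟩, hpsum, hpsupp⟩ := hx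
      dsimp only at hbank hpsum hpsupp
      have hp0 : ∀ z, q z ≠ 0 → p z = 0 := by
        intro z hz
        by_contra hne
        have := hpsupp z hne
        rw [Finset.mem_filter] at this
        exact hz this.2
      constructor
      · -- total sum
        have hsub : ∑ z ∈ univ.filter fun z => q z = 0, p z = ∑ z, p z := by
          apply Finset.sum_subset (Finset.filter_subset _ _)
          intro z _ hz
          rw [Finset.mem_filter] at hz
          simp only [mem_univ, true_and] at hz
          exact hp0 z hz
        rw [hsub] at hpsum
        have : ∑ z, ((p z : ℤ) - (q z : ℤ)) = (∑ z, p z : ℕ) - (∑ z, q z : ℕ) := by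
          push_cast
          rw [Finset.sum_sub_distrib]
        rw [this, hpsum]
        push_cast
        ring
      · -- bank debts
        intro i
        have hmin : ∀ z, min ((p z : ℤ) - (q z : ℤ)) 0 = -(q z : ℤ) := by
          intro z
          rcases Nat.eq_zero_or_pos (q z) with h | h
          · simp [h]
          · rw [hp0 z (by omega)]
            omega
        rw [bankDebt]
        rw [Finset.sum_congr rfl fun z _ => hmin z, Finset.sum_neg_distrib]
        have hcast : ∑ z ∈ univ.filter fun z => bank z = i, (q z : ℤ)
            = ((∑ z ∈ univ.filter fun z => bank z = i, q z : ℕ) : ℤ) := by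
          push_cast
          try rfl
        have := hbank i
        omega
    · -- left inverse
      rintro ⟨ξ, hξ⟩
      apply Subtype.ext
      funext z
      simp only
      omega
    · -- right inverse
      rintro ⟨⟨q, p⟩, hx⟩
      apply Subtype.ext
      have hx' := hx
      rw [hSfin, Finset.mem_sigma, mem_piAntidiag] at hx'
      obtain ⟨_, _, hpsupp⟩ := hx'
      have hp0 : ∀ z, q z ≠ 0 → p z = 0 := by
        intro z hz
        by_contra hne
        have := hpsupp z hne
        rw [Finset.mem_filter] at this
        exact hz this.2
      simp only
      refine Sigma.ext ?_ (heq_of_eq ?_)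
      · funext z
        have := hp0 z
        simp only
        omega
      · funext z
        have := hp0 z
        simp only
        omega
  rw [Nat.card_congr e, Nat.card_eq_finsetCard]

end AuxCount

theorem card_configurations {V : Type*} [Fintype V] [DecidableEq V] {K : ℕ} (hK : 1 ≤ K)
    (G : SimpleGraph V) (hG : G.Connected) (hN : 2 ≤ Fintype.card V)
    (bank : V → Fin K) (R : Fin K → ℕ) (M : ℕ) :
    Nat.card {ξ : V → ℤ // admissible bank R M ξ}
      = Lambda (fun i => (Finset.univ.filter fun z => bank z = i).card) R (M : ℤ) := by
  classical
  rw [stepA bank R M, Finset.card_sigma]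
  set n : Fin K → ℕ := fun i => (univ.filter fun z => bank z = i).card with hn
  have hNsum : Fintype.card V = ∑ i, n i := by
    rw [← Finset.card_univ]
    exact Finset.card_eq_sum_card_fiberwise (fun z _ => mem_univ (bank z))
  rw [Finset.sum_congr rfl fun q _ => card_piAntidiag
    (univ.filter fun z => q z = 0) (M + ∑ z, q z)]
  set Dfin := ((Fintype.piFinset fun _z : V => Finset.range ((∑ i, R i) + 1)).filter fun q =>
        ∀ i, ∑ z ∈ univ.filter fun z => bank z = i, q z ≤ R i) with hDfin
  set g : (V → ℕ) → (Fin K → ℕ) × (Fin K → ℕ) := fun q =>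
    (fun i => ∑ z ∈ univ.filter fun z => bank z = i, q z,
     fun i => ((univ.filter fun z => bank z = i).filter fun z => q z ≠ 0).card) with hg
  set AB := (Fintype.piFinset fun i => Finset.range (R i + 1)) ×ˢ
    (Fintype.piFinset fun i => Finset.range (n i + 1)) with hAB
  have hmaps : ∀ q ∈ Dfin, g q ∈ AB := by
    intro q hq
    rw [hDfin, Finset.mem_filter] at hq
    rw [hAB, Finset.mem_product]
    simp only [hg, hn]
    constructor
    · rw [Fintype.mem_piFinset]
      intro i
      rw [Finset.mem_range]
      have := hq.2 i
      omega
    · rw [Fintype.mem_piFinset]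
      intro i
      rw [Finset.mem_range]
      have := Finset.card_filter_le (univ.filter fun z => bank z = i)
        (fun z => q z ≠ 0)
      omega
  rw [← Finset.sum_fiberwise_of_maps_to hmaps
    (fun q => Nat.multichoose ((univ.filter fun z => q z = 0).card) (M + ∑ z, q z))]
  rw [hAB, Finset.sum_product, Lambda]
  apply Finset.sum_congr rfl
  intro a ha
  apply Finset.sum_congr rfl
  intro b hb
  rw [Fintype.mem_piFinset] at ha hb
  have haR : ∀ i, a i ≤ R i := by
    intro i; have := ha i; rw [Finset.mem_range] at this; omega
  have hbn : ∀ i, b i ≤ n i := by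
    intro i; have := hb i; rw [Finset.mem_range] at this; omega
  have hgiff : ∀ q, g q = (a, b) ↔
      (∀ i, (∑ z ∈ univ.filter fun z => bank z = i, q z) = a i ∧
        ((univ.filter fun z => bank z = i).filter fun z => q z ≠ 0).card = b i) := by
    intro q
    rw [hg, Prod.mk.injEq, funext_iff, funext_iff, ← forall_and]
  have hsumq : ∀ q : V → ℕ, (∀ i, (∑ z ∈ univ.filter fun z => bank z = i, q z) = a i) →
      ∑ z, q z = ∑ i, a i := by
    intro q hq
    rw [← Finset.sum_fiberwise univ bank q]
    exact Finset.sum_congr rfl fun i _ => hq i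
  have hconst : ∀ q ∈ Dfin.filter (fun q => g q = (a, b)),
      Nat.multichoose ((univ.filter fun z => q z = 0).card) (M + ∑ z, q z)
      = Nat.multichoose (Fintype.card V - ∑ i, b i) (M + ∑ i, a i) := by
    intro q hq
    rw [Finset.mem_filter, hgiff q] at hq
    have hsupp : (univ.filter fun z => q z ≠ 0).card = ∑ i, b i := by
      rw [Finset.card_eq_sum_card_fiberwise
        (f := bank) (t := univ) (fun z _ => mem_univ _)]
      apply Finset.sum_congr rfl
      intro i _
      rw [← (hq.2 i).2, Finset.filter_filter, Finset.filter_filter]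
      exact congrArg Finset.card (Finset.filter_congr fun z _ => and_comm)
    have hzero : (univ.filter fun z => q z = 0).card
        = Fintype.card V - ∑ i, b i := by
      have h01 : (univ.filter fun z => q z = 0)
          = univ \ (univ.filter fun z => q z ≠ 0) := by
        ext z; simp [not_not]
      rw [h01, Finset.card_sdiff_of_subset (Finset.filter_subset _ _), Finset.card_univ, hsupp]
    rw [hzero, hsumq q (fun i => (hq.2 i).1)]
  rw [Finset.sum_congr rfl hconst, Finset.sum_const, smul_eq_mul]
  have hfibereq : Dfin.filter (fun q => g q = (a, b))
      = ((univ : Finset V).piAntidiag (∑ i, a i)).filter fun q =>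
          ∀ i, (∑ z ∈ univ.filter fun z => bank z = i, q z) = a i ∧
            ((univ.filter fun z => bank z = i).filter fun z => q z ≠ 0).card = b i := by
    ext q
    rw [Finset.mem_filter, Finset.mem_filter, Finset.mem_filter, mem_piAntidiag,
      hgiff q]
    constructor
    · rintro ⟨⟨_, hle⟩, hcond⟩
      exact ⟨⟨hsumq q (fun i => (hcond i).1), fun z _ => mem_univ z⟩, hcond⟩
    · rintro ⟨⟨_, _⟩, hcond⟩
      refine ⟨⟨?_, fun i => (hcond i).1 ▸ haR i⟩, hcond⟩
      rw [Fintype.mem_piFinset]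
      intro z
      rw [Finset.mem_range]
      have h3 : q z ≤ ∑ w ∈ univ.filter fun w => bank w = bank z, q w :=
        Finset.single_le_sum (fun w _ => Nat.zero_le _)
          (by rw [Finset.mem_filter]; exact ⟨mem_univ z, rfl⟩)
      have h4 : R (bank z) ≤ ∑ i, R i :=
        Finset.single_le_sum (fun i _ => Nat.zero_le _) (mem_univ _)
      have h5 := (hcond (bank z)).1
      have h6 := haR (bank z)
      omega
  rw [hfibereq, card_bank_product bank a b]
  exact summand_eq n b a M (Fintype.card V) hN hNsum hbn
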